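/- Let Y be a first-countable topological space such that every map from [0,1] to Y with F_σ preimages of open sets is a pointwise limit of continuous maps. Then Y is locally almost arcwise connected. -/

import Mathlib

open unitInterval

def IsFSigma {X : Type*} [TopologicalSpace X] (A : Set X) : Prop :=
  ∃ F : ℕ → Set X, (∀ n, IsClosed (F n)) ∧ A = ⋃ n, F n

/-- `Y` is locally almost arcwise connected: every neighborhood `V` of a point contains a
neighborhood `U` such that any two nonempty open subsets of `U` can be joined by an arc lying
in the closure of `V`. -/
def LocallyAlmostArcwiseConnected (Y : Type*) [TopologicalSpace Y] : Prop :=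
  ∀ y : Y, ∀ V ∈ nhds y, ∃ U ∈ nhds y, U ⊆ V ∧
    ∀ W₁ W₂ : Set Y, IsOpen W₁ → IsOpen W₂ → W₁.Nonempty → W₂.Nonempty → W₁ ⊆ U → W₂ ⊆ U →
      ∃ γ : I → Y, Continuous γ ∧ γ 0 ∈ W₁ ∧ γ 1 ∈ W₂ ∧ Set.range γ ⊆ closure V

section Helpers

lemma isFSigma_of_countable {X : Type*} [TopologicalSpace X] [T1Space X] {A : Set X}
    (hA : A.Countable) : IsFSigma A := by
  rcases A.eq_empty_or_nonempty with h | h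
  · exact ⟨fun _ => ∅, fun _ => isClosed_empty, by simp [h]⟩
  · obtain ⟨u, hu⟩ := hA.exists_eq_range h
    exact ⟨fun n => {u n}, fun n => isClosed_singleton, by rw [hu, Set.range_eq_iUnion]⟩

lemma isFSigma_of_isOpen {X : Type*} [MetricSpace X] {A : Set X}
    (hA : IsOpen A) : IsFSigma A := by
  rcases eq_or_ne Aᶜ ∅ with h | h
  · have : A = Set.univ := by simpa [Set.compl_empty_iff] using h
    exact ⟨fun _ => Set.univ, fun _ => isClosed_univ, by rw [this, Set.iUnion_const]⟩
  · have hne : Aᶜ.Nonempty := Set.nonempty_iff_ne_empty.2 h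
    refine ⟨fun n => {x | (1:ℝ)/(n+1) ≤ Metric.infDist x Aᶜ}, fun n => ?_, ?_⟩
    · exact isClosed_le continuous_const (Metric.continuous_infDist_pt _)
    · ext x
      simp only [Set.mem_iUnion, Set.mem_setOf_eq]
      constructor
      · intro hx
        have hpos : 0 < Metric.infDist x Aᶜ :=
          (IsClosed.notMem_iff_infDist_pos hA.isClosed_compl hne).1 (by simpa using hx)
        obtain ⟨n, hn⟩ := exists_nat_one_div_lt hpos
        exact ⟨n, hn.le⟩
      · rintro ⟨n, hn⟩
        by_contra hx
        have : Metric.infDist x Aᶜ = 0 := Metric.infDist_zero_of_mem (by simpa using hx)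
        rw [this] at hn
        have : (0:ℝ) < 1/(n+1) := by positivity
        linarith

noncomputable def xiR : ℝ := Real.sqrt 2 / 8

lemma xiR_irrational : Irrational xiR := by
  have := irrational_sqrt_two
  have h8 : ((8:ℚ):ℝ) = (8:ℝ) := by norm_num
  simpa [xiR, h8] using this.div_ratCast (q := 8) (by norm_num)

lemma xiR_pos : 0 < xiR := by
  have h : 0 < Real.sqrt 2 := Real.sqrt_pos.2 (by norm_num)
  unfold xiR; linarith

lemma xiR_lt : xiR < 1/4 := by
  have h : Real.sqrt 2 < 2 := by
    nlinarith [Real.sq_sqrt (by norm_num : (0:ℝ) ≤ 2), Real.sqrt_nonneg 2]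
  unfold xiR; linarith

def sgn (e : Bool) : ℚ := if e then 1 else -1

noncomputable def pt (n k : ℕ) (e : Bool) : ℝ :=
  ((((2*k+1 : ℚ))/2^(n+1) : ℚ) : ℝ) + ((sgn e : ℚ) : ℝ) * xiR * (((1/4^n : ℚ)) : ℝ)

lemma pt_lt_pt (n k : ℕ) : pt n k false < pt n k true := by
  have h1 : (0:ℝ) < 1/4^n := by positivity
  have h2 := xiR_pos
  unfold pt
  simp only [sgn]
  push_cast
  nlinarith [mul_pos h2 h1]

lemma abs_term_lt {e : Bool} (n : ℕ) : |((sgn e : ℚ) : ℝ) * xiR * (((1/4^n : ℚ)) : ℝ)| < 1/2^(n+1) := by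
  have h1 : |((sgn e : ℚ) : ℝ)| = 1 := by cases e <;> simp [sgn]
  have h2 : |xiR| = xiR := abs_of_pos xiR_pos
  have h3 : |(((1/4^n : ℚ)) : ℝ)| = 1/4^n := by
    push_cast; rw [abs_of_pos]; positivity
  rw [abs_mul, abs_mul, h1, h2, h3, one_mul]
  have h4 : (1:ℝ)/4^n ≤ 1/2^n := by
    apply div_le_div_of_nonneg_left (by norm_num) (by positivity)
    exact pow_le_pow_left₀ (by norm_num) (by norm_num) n
  have h5 : xiR * ((1:ℝ)/4^n) ≤ xiR * (1/2^n) :=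
    mul_le_mul_of_nonneg_left h4 xiR_pos.le
  have h6 : xiR * ((1:ℝ)/2^n) < (1/4) * (1/2^n) := by
    exact mul_lt_mul_of_pos_right xiR_lt (by positivity)
  have h7 : (1/4 : ℝ) * (1/2^n) < 1/2^(n+1) := by
    have heq : (1/4:ℝ)*(1/2^n) = 1/(2^n*4) := by ring
    rw [heq, pow_succ]
    apply one_div_lt_one_div_of_lt (by positivity)
    nlinarith [pow_pos (show (0:ℝ) < 2 by norm_num) n]
  linarith

lemma pt_gt (n k : ℕ) (e : Bool) : (k:ℝ)/2^n < pt n k e := by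
  have h := abs_term_lt (e := e) n
  have hc : ((((2*k+1 : ℚ))/2^(n+1) : ℚ) : ℝ) = (k:ℝ)/2^n + 1/2^(n+1) := by
    push_cast
    rw [pow_succ]
    field_simp
  have h' := abs_lt.1 h
  unfold pt
  rw [hc]
  linarith [h'.1]

lemma pt_lt' (n k : ℕ) (e : Bool) : pt n k e < ((k:ℝ)+1)/2^n := by
  have h := abs_term_lt (e := e) n
  have hc : ((((2*k+1 : ℚ))/2^(n+1) : ℚ) : ℝ) = ((k:ℝ)+1)/2^n - 1/2^(n+1) := by
    push_cast
    rw [pow_succ]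
    field_simp
    ring
  have h' := abs_lt.1 h
  unfold pt
  rw [hc]
  linarith [h'.2]

lemma pt_mem (n k : ℕ) (e : Bool) (hk : k + 1 ≤ 2^n) : pt n k e ∈ Set.Icc (0:ℝ) 1 := by
  constructor
  · have h0 : (0:ℝ) ≤ (k:ℝ)/2^n := by positivity
    linarith [pt_gt n k e]
  · have h2 : ((k:ℝ)+1)/2^n ≤ 1 := by
      rw [div_le_one (by positivity)]
      have : ((k+1 : ℕ):ℝ) ≤ ((2^n : ℕ):ℝ) := Nat.cast_le.2 hk
      push_cast at this
      linarith
    linarith [pt_lt' n k e]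

lemma pt_injective {n k : ℕ} {e : Bool} {n' k' : ℕ} {e' : Bool}
    (hEq : pt n k e = pt n' k' e') : n = n' ∧ k = k' ∧ e = e' := by
  have key : ((sgn e * (1/4^n) - sgn e' * (1/4^n') : ℚ) : ℝ) * xiR
      = (((2*k'+1)/2^(n'+1) - (2*k+1)/2^(n+1) : ℚ) : ℝ) := by
    unfold pt at hEq
    push_cast at hEq ⊢
    ring_nf
    ring_nf at hEq
    linarith
  by_cases hB : (sgn e * (1/4^n) - sgn e' * (1/4^n') : ℚ) = 0
  · have h0 : (sgn e * (1/4^n) : ℚ) = sgn e' * (1/4^n') := by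
      have := sub_eq_zero.mp hB; linarith
    have p1 : (0:ℚ) < ((4:ℚ)^n)⁻¹ := by positivity
    have p2 : (0:ℚ) < ((4:ℚ)^n')⁻¹ := by positivity
    have hee : e = e' := by
      cases e <;> cases e' <;> simp [sgn] at h0 ⊢ <;> linarith
    subst hee
    have hsne : sgn e ≠ 0 := by cases e <;> simp [sgn]
    have h1414 : (1/4^n : ℚ) = 1/4^n' := mul_left_cancel₀ hsne h0
    have h44 : (4:ℚ)^n = 4^n' := by
      rw [one_div, one_div] at h1414
      exact inv_inj.mp h1414
    have hnn : n = n' := by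
      have hcast : ((4^n : ℕ) : ℚ) = ((4^n' : ℕ) : ℚ) := by push_cast; exact h44
      exact Nat.pow_right_injective (by norm_num) (Nat.cast_injective hcast)
    subst hnn
    refine ⟨rfl, ?_, rfl⟩
    have hcc : (((2*k+1)/2^(n+1) : ℚ) : ℝ) = (((2*k'+1)/2^(n+1) : ℚ) : ℝ) := by
      unfold pt at hEq
      rw [h1414] at hEq
      linarith
    have hcc' : ((2*k+1)/2^(n+1) : ℚ) = ((2*k'+1)/2^(n+1) : ℚ) := by exact_mod_cast hcc
    have h2pos : ((2:ℚ))^(n+1) ≠ 0 := by positivity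
    field_simp at hcc'
    have : 2*k+1 = 2*k'+1 := by exact_mod_cast hcc'
    omega
  · exact absurd key (by
      intro hk2
      exact (xiR_irrational.ratCast_mul hB) ⟨_, hk2.symm⟩)

lemma exists_dyadic {u v : ℝ} (hu : 0 ≤ u) (hv : v ≤ 1) (huv : u < v) :
    ∃ n k : ℕ, u < (k:ℝ)/2^n ∧ ((k:ℝ)+1)/2^n < v ∧ k + 1 ≤ 2^n := by
  obtain ⟨n, hn⟩ := pow_unbounded_of_one_lt (R := ℝ) (3/(v-u)) (by norm_num : (1:ℝ) < 2)
  have hp : (0:ℝ) < 2^n := by positivity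
  have h3 : 3/(v-u) < 2^n := hn
  have hvu : 0 < v - u := by linarith
  have h3' : 3 < (v-u) * 2^n := by
    rw [div_lt_iff₀ hvu] at h3; linarith
  set k : ℕ := ⌊u * 2^n⌋₊ + 1 with hk
  have hfl : (⌊u * 2^n⌋₊ : ℝ) ≤ u * 2^n := Nat.floor_le (by positivity)
  have hfl2 : u * 2^n < (⌊u * 2^n⌋₊ : ℝ) + 1 := Nat.lt_floor_add_one _
  refine ⟨n, k, ?_, ?_, ?_⟩
  · rw [lt_div_iff₀ hp]
    push_cast [hk]
    linarith
  · rw [div_lt_iff₀ hp]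
    push_cast [hk]
    nlinarith
  · have h1 : ((k:ℝ)+1)/2^n < 1 := by
      rw [div_lt_one hp]
      push_cast [hk]
      nlinarith
    rw [div_lt_one hp] at h1
    have : ((k+1 : ℕ):ℝ) < ((2^n : ℕ):ℝ) := by push_cast; push_cast at h1; linarith
    exact_mod_cast this.le

lemma exists_pair_subset {O : Set I} (hO : IsOpen O) (hne : O.Nonempty) :
    ∃ n k : ℕ, k + 1 ≤ 2^n ∧ ∀ x : I, pt n k false ≤ (x:ℝ) → (x:ℝ) ≤ pt n k true → x ∈ O := by
  obtain ⟨x₀, hx₀⟩ := hne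
  obtain ⟨O', hO', hOeq⟩ := isOpen_induced_iff.mp hO
  have hx₀' : (x₀:ℝ) ∈ O' := by rw [← hOeq] at hx₀; exact hx₀
  obtain ⟨ε, hε, hball⟩ := Metric.isOpen_iff.mp hO' _ hx₀'
  have hx01 : (0:ℝ) ≤ x₀ := x₀.2.1
  have hx02 : (x₀:ℝ) ≤ 1 := x₀.2.2
  set u := max ((x₀:ℝ) - ε) 0 with hu
  set v := min ((x₀:ℝ) + ε) 1 with hv
  have huv : u < v := by
    rw [hu, hv]
    apply max_lt <;> apply lt_min <;> linarith
  obtain ⟨n, k, h1, h2, h3⟩ := exists_dyadic (le_max_right _ _) (min_le_right _ _) huv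
  refine ⟨n, k, h3, fun x hxa hxb => ?_⟩
  have hax : u < (x:ℝ) := lt_of_lt_of_le (lt_trans h1 (pt_gt n k false)) hxa
  have hxv : (x:ℝ) < v := lt_of_le_of_lt hxb (lt_trans (pt_lt' n k true) h2)
  have : (x:ℝ) ∈ Metric.ball (x₀:ℝ) ε := by
    rw [Real.ball_eq_Ioo]
    constructor
    · exact lt_of_le_of_lt (le_max_left _ _) hax
    · exact lt_of_lt_of_le hxv (min_le_left _ _)
  rw [← hOeq]
  exact hball this

end Helpers

/-- If `Y` is first countable and every map `[0,1] → Y` with `F_σ` preimages of open sets is a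
pointwise limit of continuous maps, then `Y` is locally almost arcwise connected. -/
theorem locallyAlmostArcwiseConnected_of_H1_subset_B1 {Y : Type*} [TopologicalSpace Y]
    [FirstCountableTopology Y]
    (h : ∀ f : I → Y, (∀ V : Set Y, IsOpen V → IsFSigma (f ⁻¹' V)) →
      ∃ g : ℕ → I → Y, (∀ n, Continuous (g n)) ∧
        ∀ x : I, Filter.Tendsto (fun n => g n x) Filter.atTop (nhds (f x))) :
    LocallyAlmostArcwiseConnected Y := by
  classical
  by_contra hcon
  unfold LocallyAlmostArcwiseConnected at hcon
  push_neg at hcon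
  obtain ⟨y, V, hVmem, hbad⟩ := hcon
  -- antitone neighborhood basis
  obtain ⟨s, hs⟩ := Filter.exists_antitone_basis (nhds y)
  have hUs : ∀ j : ℕ, s j ∩ V ∈ nhds y := fun j => Filter.inter_mem (hs.mem j) hVmem
  have hbadj := fun j : ℕ => hbad (s j ∩ V) (hUs j) Set.inter_subset_right
  choose W₁ W₂ hW₁o hW₂o hW₁n hW₂n hW₁s hW₂s hnoarc using hbadj
  choose y₁ hy₁ using hW₁n
  choose y₂ hy₂ using hW₂n
  -- the special points as elements of I
  have memI : ∀ (n k : ℕ) (e : Bool), k + 1 ≤ 2^n → pt n k e ∈ I := fun n k e hk => pt_mem n k e hk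
  -- the map f
  set f : I → Y := fun x =>
    if hx : ∃ p : ℕ × ℕ, p.2 + 1 ≤ 2^p.1 ∧ (x:ℝ) = pt p.1 p.2 false then
      y₁ (Nat.pair hx.choose.1 hx.choose.2)
    else if hx2 : ∃ p : ℕ × ℕ, p.2 + 1 ≤ 2^p.1 ∧ (x:ℝ) = pt p.1 p.2 true then
      y₂ (Nat.pair hx2.choose.1 hx2.choose.2)
    else y with hf
  -- values of f on the special points
  have hffalse : ∀ (n k : ℕ) (hk : k + 1 ≤ 2^n) (x : I), (x:ℝ) = pt n k false →
      f x = y₁ (Nat.pair n k) := by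
    intro n k hk x hx
    have hex : ∃ p : ℕ × ℕ, p.2 + 1 ≤ 2^p.1 ∧ (x:ℝ) = pt p.1 p.2 false := ⟨(n, k), hk, hx⟩
    rw [hf]
    simp only [dif_pos hex]
    obtain ⟨h1, h2⟩ := hex.choose_spec
    have := pt_injective (hx.symm.trans h2)
    rw [← this.1, ← this.2.1]
  have hftrue : ∀ (n k : ℕ) (hk : k + 1 ≤ 2^n) (x : I), (x:ℝ) = pt n k true →
      f x = y₂ (Nat.pair n k) := by
    intro n k hk x hx
    have hex2 : ∃ p : ℕ × ℕ, p.2 + 1 ≤ 2^p.1 ∧ (x:ℝ) = pt p.1 p.2 true := ⟨(n, k), hk, hx⟩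
    have hnex : ¬ ∃ p : ℕ × ℕ, p.2 + 1 ≤ 2^p.1 ∧ (x:ℝ) = pt p.1 p.2 false := by
      rintro ⟨p, hp1, hp2⟩
      exact absurd (pt_injective (hp2.symm.trans hx)).2.2 (by simp)
    rw [hf]
    simp only [dif_neg hnex, dif_pos hex2]
    obtain ⟨h1, h2⟩ := hex2.choose_spec
    have := pt_injective (hx.symm.trans h2)
    rw [← this.1, ← this.2.1]
  -- off the special points f is y
  set D : Set I := {x : I | ∃ n k : ℕ, ∃ e : Bool, (x:ℝ) = pt n k e} with hD
  have hfD : ∀ x : I, x ∉ D → f x = y := by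
    intro x hx
    show (if hx : _ then _ else if hx2 : _ then _ else y) = y
    rw [dif_neg, dif_neg]
    · rintro ⟨p, _, hp⟩; exact hx ⟨p.1, p.2, true, hp⟩
    · rintro ⟨p, _, hp⟩; exact hx ⟨p.1, p.2, false, hp⟩
  have hDcount : D.Countable := by
    have : D ⊆ ⋃ (n : ℕ) (k : ℕ) (e : Bool), {x : I | (x:ℝ) = pt n k e} := by
      rintro x ⟨n, k, e, hx⟩
      simp only [Set.mem_iUnion]
      exact ⟨n, k, e, hx⟩
    refine Set.Countable.mono this ?_
    refine Set.countable_iUnion fun n => Set.countable_iUnion fun k => Set.countable_iUnion fun e => ?_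
    exact Set.Subsingleton.countable (fun a ha b hb => Subtype.ext (ha.trans hb.symm))
  -- f has F_sigma preimages
  have hFσ : ∀ O : Set Y, IsOpen O → IsFSigma (f ⁻¹' O) := by
    intro O hO
    by_cases hyO : y ∈ O
    · -- preimage is cofinite hence open
      obtain ⟨N, -, hN⟩ := hs.1.mem_iff.mp (hO.mem_nhds hyO)
      have hyin : ∀ j, N ≤ j → y₁ j ∈ O ∧ y₂ j ∈ O := by
        intro j hj
        constructor
        · exact hN (hs.2 hj ((hW₁s j) (hy₁ j)).1)
        · exact hN (hs.2 hj ((hW₂s j) (hy₂ j)).1)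
      set E : Set I := ⋃ (p : ℕ × ℕ) (_ : Nat.pair p.1 p.2 < N) (e : Bool),
        {x : I | (x:ℝ) = pt p.1 p.2 e} with hE
      have hEfin : E.Finite := by
        refine Set.Finite.biUnion ?_ fun p _ => ?_
        · have hinj : Function.Injective (fun p : ℕ × ℕ => Nat.pair p.1 p.2) := by
            intro a b hab
            obtain ⟨h1, h2⟩ := Nat.pair_eq_pair.mp hab
            exact Prod.ext h1 h2
          exact Set.Finite.preimage hinj.injOn (Set.finite_lt_nat N)
        · refine Set.finite_iUnion fun e => ?_
          exact Set.Subsingleton.finite (fun a ha b hb => Subtype.ext (ha.trans hb.symm))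
      have hsub : (f ⁻¹' O)ᶜ ⊆ E := by
        intro x hx
        simp only [Set.mem_compl_iff, Set.mem_preimage] at hx
        simp only [hf] at hx
        by_cases h1 : ∃ p : ℕ × ℕ, p.2 + 1 ≤ 2^p.1 ∧ (x:ℝ) = pt p.1 p.2 false
        · rw [dif_pos h1] at hx
          obtain ⟨hp1, hp2⟩ := h1.choose_spec
          have hlt : Nat.pair h1.choose.1 h1.choose.2 < N := by
            by_contra hge
            exact hx ((hyin _ (not_lt.mp hge)).1)
          rw [hE]
          simp only [Set.mem_iUnion]
          exact ⟨h1.choose, hlt, false, hp2⟩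
        · rw [dif_neg h1] at hx
          by_cases h2 : ∃ p : ℕ × ℕ, p.2 + 1 ≤ 2^p.1 ∧ (x:ℝ) = pt p.1 p.2 true
          · rw [dif_pos h2] at hx
            obtain ⟨hp1, hp2⟩ := h2.choose_spec
            have hlt : Nat.pair h2.choose.1 h2.choose.2 < N := by
              by_contra hge
              exact hx ((hyin _ (not_lt.mp hge)).2)
            rw [hE]
            simp only [Set.mem_iUnion]
            exact ⟨h2.choose, hlt, true, hp2⟩
          · rw [dif_neg h2] at hx
            exact absurd hyO hx
      have hcfin : (f ⁻¹' O)ᶜ.Finite := hEfin.subset hsub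
      have hopen : IsOpen (f ⁻¹' O) := by
        rw [← compl_compl (f ⁻¹' O)]
        exact hcfin.isClosed.isOpen_compl
      exact isFSigma_of_isOpen hopen
    · -- preimage is countable
      have hsub : f ⁻¹' O ⊆ D := by
        intro x hx
        by_contra hxD
        rw [Set.mem_preimage, hfD x hxD] at hx
        exact hyO hx
      exact isFSigma_of_countable (hDcount.mono hsub)
  obtain ⟨g, hgc, hgl⟩ := h f hFσ
  -- for each valid pair (n,k) and each sufficiently large m, g m leaves closure V on the segment
  have harc : ∀ (n k : ℕ) (hk : k + 1 ≤ 2^n) (m : ℕ),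
      g m ⟨pt n k false, memI n k false hk⟩ ∈ W₁ (Nat.pair n k) →
      g m ⟨pt n k true, memI n k true hk⟩ ∈ W₂ (Nat.pair n k) →
      ∃ x : I, pt n k false ≤ (x:ℝ) ∧ (x:ℝ) ≤ pt n k true ∧ g m x ∉ closure V := by
    intro n k hk m hga hgb
    by_contra hall
    push_neg at hall
    set a : ℝ := pt n k false with ha
    set b : ℝ := pt n k true with hb
    have hab : a < b := pt_lt_pt n k
    have hmemseg : ∀ t : I, a + (t:ℝ) * (b - a) ∈ I := by
      intro t
      have h0 : (0:ℝ) ≤ t := t.2.1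
      have h1 : (t:ℝ) ≤ 1 := t.2.2
      have haI := memI n k false hk
      have hbI := memI n k true hk
      constructor
      · have : (0:ℝ) ≤ (t:ℝ) * (b - a) := mul_nonneg h0 (by linarith)
        have := haI.1
        simp only [← ha] at this ⊢
        linarith
      · have : (t:ℝ) * (b - a) ≤ 1 * (b - a) := mul_le_mul_of_nonneg_right h1 (by linarith)
        have := hbI.2
        simp only [← hb] at this ⊢
        linarith
    set γ : I → Y := fun t => g m ⟨a + (t:ℝ) * (b - a), hmemseg t⟩ with hγ
    have hγc : Continuous γ := by
      apply (hgc m).comp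
      apply Continuous.subtype_mk
      exact continuous_const.add (continuous_subtype_val.mul continuous_const)
    have hγ0 : γ 0 ∈ W₁ (Nat.pair n k) := by
      have : (⟨a + ((0:I):ℝ) * (b - a), hmemseg 0⟩ : I) = ⟨pt n k false, memI n k false hk⟩ := by
        apply Subtype.ext
        simp [ha]
      rw [hγ]
      simp only [this]
      exact hga
    have hγ1 : γ 1 ∈ W₂ (Nat.pair n k) := by
      have : (⟨a + ((1:I):ℝ) * (b - a), hmemseg 1⟩ : I) = ⟨pt n k true, memI n k true hk⟩ := by
        apply Subtype.ext
        simp [ha, hb]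
      rw [hγ]
      simp only [this]
      exact hgb
    have hrange : Set.range γ ⊆ closure V := by
      rintro z ⟨t, rfl⟩
      have h0 : (0:ℝ) ≤ t := t.2.1
      have h1 : (t:ℝ) ≤ 1 := t.2.2
      refine hall ⟨a + (t:ℝ) * (b - a), hmemseg t⟩ ?_ ?_
      · have : (0:ℝ) ≤ (t:ℝ) * (b - a) := mul_nonneg h0 (by linarith)
        simp only [← ha]
        linarith
      · have : (t:ℝ) * (b - a) ≤ 1 * (b - a) := mul_le_mul_of_nonneg_right h1 (by linarith)
        simp only [← hb]
        linarith
    exact hnoarc (Nat.pair n k) γ hγc hγ0 hγ1 hrange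
  -- eventual membership of the endpoints
  have hevent : ∀ (n k : ℕ) (hk : k + 1 ≤ 2^n), ∃ M : ℕ, ∀ m, M ≤ m →
      g m ⟨pt n k false, memI n k false hk⟩ ∈ W₁ (Nat.pair n k) ∧
      g m ⟨pt n k true, memI n k true hk⟩ ∈ W₂ (Nat.pair n k) := by
    intro n k hk
    have hxa : f ⟨pt n k false, memI n k false hk⟩ = y₁ (Nat.pair n k) :=
      hffalse n k hk _ rfl
    have hxb : f ⟨pt n k true, memI n k true hk⟩ = y₂ (Nat.pair n k) :=
      hftrue n k hk _ rfl
    have h1 := (hgl ⟨pt n k false, memI n k false hk⟩).eventually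
      ((hW₁o (Nat.pair n k)).mem_nhds (by rw [hxa]; exact hy₁ _))
    have h2 := (hgl ⟨pt n k true, memI n k true hk⟩).eventually
      ((hW₂o (Nat.pair n k)).mem_nhds (by rw [hxb]; exact hy₂ _))
    obtain ⟨M₁, hM₁⟩ := Filter.eventually_atTop.mp h1
    obtain ⟨M₂, hM₂⟩ := Filter.eventually_atTop.mp h2
    exact ⟨max M₁ M₂, fun m hm => ⟨hM₁ m (le_trans (le_max_left _ _) hm),
      hM₂ m (le_trans (le_max_right _ _) hm)⟩⟩
  -- the Baire category argument
  set H : ℕ → Set I := fun N => ⋃ (m : ℕ) (_ : N ≤ m), (g m) ⁻¹' (closure V)ᶜ with hH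
  have hHopen : ∀ N, IsOpen (H N) := by
    intro N
    refine isOpen_iUnion fun m => isOpen_iUnion fun _ => ?_
    exact (isClosed_closure.isOpen_compl).preimage (hgc m)
  have hHdense : ∀ N, Dense (H N) := by
    intro N
    rw [dense_iff_inter_open]
    intro O hO hOne
    obtain ⟨n, k, hk, hsub⟩ := exists_pair_subset hO hOne
    obtain ⟨M, hM⟩ := hevent n k hk
    set m := max M N with hm
    obtain ⟨hga, hgb⟩ := hM m (le_max_left _ _)
    obtain ⟨x, hx1, hx2, hx3⟩ := harc n k hk m hga hgb
    refine ⟨x, hsub x hx1 hx2, ?_⟩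
    rw [hH]
    simp only [Set.mem_iUnion]
    exact ⟨m, le_max_right _ _, hx3⟩
  -- sets avoiding the countable set D
  set K : ℕ → ℕ → Bool → Set I := fun n k e => {x : I | (x:ℝ) = pt n k e}ᶜ with hK
  have hKopen : ∀ n k e, IsOpen (K n k e) := by
    intro n k e
    exact (isClosed_eq continuous_subtype_val continuous_const).isOpen_compl
  have hKdense : ∀ n k e, Dense (K n k e) := by
    intro n k e
    rw [dense_iff_inter_open]
    intro O hO hOne
    obtain ⟨n', k', hk', hsub⟩ := exists_pair_subset hO hOne
    have hA : (⟨pt n' k' false, memI n' k' false hk'⟩ : I) ∈ O :=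
      hsub _ le_rfl (pt_lt_pt n' k').le
    have hB : (⟨pt n' k' true, memI n' k' true hk'⟩ : I) ∈ O :=
      hsub _ (pt_lt_pt n' k').le le_rfl
    by_cases hc : pt n' k' false = pt n k e
    · refine ⟨_, hB, ?_⟩
      rw [hK]
      simp only [Set.mem_compl_iff, Set.mem_setOf_eq]
      intro hcc
      have := pt_injective ((hc.trans hcc.symm) : pt n' k' false = pt n' k' true)
      exact absurd this.2.2 (by simp)
    · exact ⟨_, hA, by rw [hK]; simpa using hc⟩
  -- combine families and apply the Baire category theorem
  set Fam : (ℕ ⊕ (ℕ × ℕ × Bool)) → Set I := fun i =>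
    match i with
    | Sum.inl N => H N
    | Sum.inr (n, k, e) => K n k e with hFam
  have hFamOpen : ∀ i, IsOpen (Fam i) := by
    rintro (N | ⟨n, k, e⟩)
    · exact hHopen N
    · exact hKopen n k e
  have hFamDense : ∀ i, Dense (Fam i) := by
    rintro (N | ⟨n, k, e⟩)
    · exact hHdense N
    · exact hKdense n k e
  have hdense : Dense (⋂ i, Fam i) := dense_iInter_of_isOpen hFamOpen hFamDense
  obtain ⟨t₀, ht₀⟩ := hdense.nonempty
  simp only [Set.mem_iInter] at ht₀
  -- t₀ avoids D
  have ht₀D : t₀ ∉ D := by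
    rintro ⟨n, k, e, hx⟩
    exact (ht₀ (Sum.inr (n, k, e))) hx
  have hft₀ : f t₀ = y := hfD t₀ ht₀D
  -- convergence at t₀
  have hconv := hgl t₀
  rw [hft₀] at hconv
  have hev : ∀ᶠ m in Filter.atTop, g m t₀ ∈ V := hconv.eventually (by exact hVmem)
  obtain ⟨M, hM⟩ := Filter.eventually_atTop.mp hev
  have hHM : t₀ ∈ H M := ht₀ (Sum.inl M)
  simp only [hH, Set.mem_iUnion] at hHM
  obtain ⟨m, hm1, hm2⟩ := hHM
  exact hm2 (subset_closure (hM m hm1))
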